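/- Suppose A internally spans [n]² under 2-neighbour bootstrap percolation. Then for every 1 ≤ L ≤ n there exists a rectangle R ⊆ [n]², internally spanned by A, with L ≤ lg(R) ≤ 2L, where lg(R) is the longer side length of R. -/

import Mathlib

def nbr (v w : ℤ × ℤ) : Prop := |w.1 - v.1| + |w.2 - v.2| = 1

def bootClosure (A : Set (ℤ × ℤ)) : Set (ℤ × ℤ) :=
  ⋂₀ {B | A ⊆ B ∧ ∀ v : ℤ × ℤ, 2 ≤ ({w | nbr v w} ∩ B).ncard → v ∈ B}

def rectZ (x0 y0 x1 y1 : ℤ) : Set (ℤ × ℤ) :=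
  {v | x0 ≤ v.1 ∧ v.1 ≤ x1 ∧ y0 ≤ v.2 ∧ v.2 ≤ y1}

def BClosed (B : Set (ℤ × ℤ)) : Prop :=
  ∀ v : ℤ × ℤ, 2 ≤ ({w | nbr v w} ∩ B).ncard → v ∈ B

lemma nbr_finite (v : ℤ × ℤ) : {w | nbr v w}.Finite := by
  apply Set.Finite.subset (Set.finite_Icc (v.1 - 1, v.2 - 1) (v.1 + 1, v.2 + 1))
  intro w hw
  simp only [nbr, Set.mem_setOf_eq] at hw
  simp only [Set.mem_Icc, Prod.le_def]
  rw [Int.abs_eq_natAbs, Int.abs_eq_natAbs] at hw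
  omega

lemma subset_bootClosure (A : Set (ℤ × ℤ)) : A ⊆ bootClosure A :=
  Set.subset_sInter fun _ hB => hB.1

lemma bootClosure_closed (A : Set (ℤ × ℤ)) : BClosed (bootClosure A) := by
  intro v hv
  apply Set.mem_sInter.2
  intro B hB
  apply hB.2 v
  refine le_trans hv (Set.ncard_le_ncard ?_ ?_)
  · exact Set.inter_subset_inter_right _ (Set.sInter_subset_of_mem hB)
  · exact (nbr_finite v).subset Set.inter_subset_left

lemma bootClosure_min {A B : Set (ℤ × ℤ)} (hAB : A ⊆ B) (hB : BClosed B) :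
    bootClosure A ⊆ B :=
  Set.sInter_subset_of_mem ⟨hAB, hB⟩

lemma bootClosure_mono {A B : Set (ℤ × ℤ)} (h : A ⊆ B) :
    bootClosure A ⊆ bootClosure B :=
  bootClosure_min (h.trans (subset_bootClosure B)) (bootClosure_closed B)

lemma mem_of_two_nbrs {B : Set (ℤ × ℤ)} (hB : BClosed B) {v p q : ℤ × ℤ}
    (hp : p ∈ B) (hq : q ∈ B) (hpq : p ≠ q) (hvp : nbr v p) (hvq : nbr v q) :
    v ∈ B := by
  apply hB v
  have hsub : {p, q} ⊆ {w | nbr v w} ∩ B := by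
    intro x hx
    rcases hx with h | h <;> subst h <;> exact ⟨by assumption, by assumption⟩
  calc 2 = ({p, q} : Set (ℤ × ℤ)).ncard := (Set.ncard_pair hpq).symm
    _ ≤ _ := Set.ncard_le_ncard hsub ((nbr_finite v).subset Set.inter_subset_left)

lemma nbr_iff {v w : ℤ × ℤ} :
    nbr v w ↔ (w.1 - v.1).natAbs + (w.2 - v.2).natAbs = 1 := by
  unfold nbr
  rw [Int.abs_eq_natAbs, Int.abs_eq_natAbs]
  omega

lemma segment_spread_v {B : Set (ℤ × ℤ)} (hB : BClosed B) {x x' c d y : ℤ}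
    (hxx : (x - x').natAbs = 1) (hy1 : c ≤ y) (hy2 : y ≤ d)
    (hseed : (x, y) ∈ B) (hside : ∀ t, c ≤ t → t ≤ d → (x', t) ∈ B) :
    ∀ t, c ≤ t → t ≤ d → (x, t) ∈ B := by
  have up : ∀ k : ℕ, y + k ≤ d → (x, y + k) ∈ B := by
    intro k
    induction k with
    | zero => intro _; simpa using hseed
    | succ k ih =>
      intro hk
      have hk' : y + (k : ℤ) ≤ d := by push_cast at hk ⊢; omega
      have h1 : (x', y + ((k : ℤ) + 1)) ∈ B := hside _ (by omega) (by push_cast at hk; omega)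
      have h2 : (x, y + (k : ℤ)) ∈ B := ih hk'
      have : (x, y + ((k : ℤ) + 1)) ∈ B := by
        apply mem_of_two_nbrs hB h1 h2
        · intro h; rw [Prod.mk.injEq] at h; omega
        · simp [nbr_iff] <;> omega
        · simp [nbr_iff] <;> omega
      convert this using 2 <;> push_cast <;> ring
  have down : ∀ k : ℕ, c ≤ y - k → (x, y - k) ∈ B := by
    intro k
    induction k with
    | zero => intro _; simpa using hseed
    | succ k ih =>
      intro hk
      have hk' : c ≤ y - (k : ℤ) := by push_cast at hk ⊢; omega
      have h1 : (x', y - ((k : ℤ) + 1)) ∈ B := hside _ (by push_cast at hk; omega) (by omega)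
      have h2 : (x, y - (k : ℤ)) ∈ B := ih hk'
      have : (x, y - ((k : ℤ) + 1)) ∈ B := by
        apply mem_of_two_nbrs hB h1 h2
        · intro h; rw [Prod.mk.injEq] at h; omega
        · simp [nbr_iff] <;> omega
        · simp [nbr_iff] <;> omega
      convert this using 2 <;> push_cast <;> ring
  intro t ht1 ht2
  rcases le_total y t with h | h
  · have := up (t - y).toNat (by omega)
    convert this using 2 <;> omega
  · have := down (y - t).toNat (by omega)
    convert this using 2 <;> omega

lemma segment_spread_h {B : Set (ℤ × ℤ)} (hB : BClosed B) {y y' a b x : ℤ}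
    (hyy : (y - y').natAbs = 1) (hx1 : a ≤ x) (hx2 : x ≤ b)
    (hseed : (x, y) ∈ B) (hside : ∀ s, a ≤ s → s ≤ b → (s, y') ∈ B) :
    ∀ s, a ≤ s → s ≤ b → (s, y) ∈ B := by
  have right : ∀ k : ℕ, x + k ≤ b → (x + k, y) ∈ B := by
    intro k
    induction k with
    | zero => intro _; simpa using hseed
    | succ k ih =>
      intro hk
      have hk' : x + (k : ℤ) ≤ b := by push_cast at hk ⊢; omega
      have h1 : (x + ((k : ℤ) + 1), y') ∈ B := hside _ (by omega) (by push_cast at hk; omega)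
      have h2 : (x + (k : ℤ), y) ∈ B := ih hk'
      have : (x + ((k : ℤ) + 1), y) ∈ B := by
        apply mem_of_two_nbrs hB h1 h2
        · intro h; rw [Prod.mk.injEq] at h; omega
        · simp [nbr_iff] <;> omega
        · simp [nbr_iff] <;> omega
      convert this using 2 <;> push_cast <;> ring
  have left : ∀ k : ℕ, a ≤ x - k → (x - k, y) ∈ B := by
    intro k
    induction k with
    | zero => intro _; simpa using hseed
    | succ k ih =>
      intro hk
      have hk' : a ≤ x - (k : ℤ) := by push_cast at hk ⊢; omega
      have h1 : (x - ((k : ℤ) + 1), y') ∈ B := hside _ (by push_cast at hk; omega) (by omega)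
      have h2 : (x - (k : ℤ), y) ∈ B := ih hk'
      have : (x - ((k : ℤ) + 1), y) ∈ B := by
        apply mem_of_two_nbrs hB h1 h2
        · intro h; rw [Prod.mk.injEq] at h; omega
        · simp [nbr_iff] <;> omega
        · simp [nbr_iff] <;> omega
      convert this using 2 <;> push_cast <;> ring
  intro s hs1 hs2
  rcases le_total x s with h | h
  · have := right (s - x).toNat (by omega)
    convert this using 2 <;> omega
  · have := left (x - s).toNat (by omega)
    convert this using 2 <;> omega

lemma mem_rectZ {x0 y0 x1 y1 : ℤ} {v : ℤ × ℤ} :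
    v ∈ rectZ x0 y0 x1 y1 ↔ x0 ≤ v.1 ∧ v.1 ≤ x1 ∧ y0 ≤ v.2 ∧ v.2 ≤ y1 := Iff.rfl

lemma eta_mem {B : Set (ℤ × ℤ)} {v : ℤ × ℤ} (h : (v.1, v.2) ∈ B) : v ∈ B := by
  rwa [Prod.mk.eta] at h

lemma fill_right {B : Set (ℤ × ℤ)} (hB : BClosed B) {a b c d y : ℤ} (hab : a ≤ b)
    (hy1 : c ≤ y) (hy2 : y ≤ d) (hR : rectZ a c b d ⊆ B) (hp : (b + 1, y) ∈ B) :
    rectZ a c (b + 1) d ⊆ B := by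
  have col : ∀ t, c ≤ t → t ≤ d → (b + 1, t) ∈ B :=
    segment_spread_v hB (x := b + 1) (x' := b) (by simp) hy1 hy2 hp
      (fun t ht1 ht2 => hR (mem_rectZ.2 ⟨hab, le_refl b, ht1, ht2⟩))
  intro v hv
  rw [mem_rectZ] at hv
  by_cases h : v.1 ≤ b
  · exact hR (mem_rectZ.2 ⟨hv.1, h, hv.2.2⟩)
  · have h1 : v.1 = b + 1 := by omega
    have := col v.2 hv.2.2.1 hv.2.2.2
    rw [← h1] at this
    exact eta_mem this

lemma fill_left {B : Set (ℤ × ℤ)} (hB : BClosed B) {a b c d y : ℤ} (hab : a ≤ b)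
    (hy1 : c ≤ y) (hy2 : y ≤ d) (hR : rectZ a c b d ⊆ B) (hp : (a - 1, y) ∈ B) :
    rectZ (a - 1) c b d ⊆ B := by
  have col : ∀ t, c ≤ t → t ≤ d → (a - 1, t) ∈ B :=
    segment_spread_v hB (x := a - 1) (x' := a) (by simp) hy1 hy2 hp
      (fun t ht1 ht2 => hR (mem_rectZ.2 ⟨le_refl a, hab, ht1, ht2⟩))
  intro v hv
  rw [mem_rectZ] at hv
  by_cases h : a ≤ v.1
  · exact hR (mem_rectZ.2 ⟨h, hv.2.1, hv.2.2⟩)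
  · have h1 : v.1 = a - 1 := by omega
    have := col v.2 hv.2.2.1 hv.2.2.2
    rw [← h1] at this
    exact eta_mem this

lemma fill_up {B : Set (ℤ × ℤ)} (hB : BClosed B) {a b c d x : ℤ} (hcd : c ≤ d)
    (hx1 : a ≤ x) (hx2 : x ≤ b) (hR : rectZ a c b d ⊆ B) (hp : (x, d + 1) ∈ B) :
    rectZ a c b (d + 1) ⊆ B := by
  have row : ∀ s, a ≤ s → s ≤ b → (s, d + 1) ∈ B :=
    segment_spread_h hB (y := d + 1) (y' := d) (by simp) hx1 hx2 hp
      (fun s hs1 hs2 => hR (mem_rectZ.2 ⟨hs1, hs2, hcd, le_refl d⟩))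
  intro v hv
  rw [mem_rectZ] at hv
  by_cases h : v.2 ≤ d
  · exact hR (mem_rectZ.2 ⟨hv.1, hv.2.1, hv.2.2.1, h⟩)
  · have h1 : v.2 = d + 1 := by omega
    have := row v.1 hv.1 hv.2.1
    rw [← h1] at this
    exact eta_mem this

lemma fill_down {B : Set (ℤ × ℤ)} (hB : BClosed B) {a b c d x : ℤ} (hcd : c ≤ d)
    (hx1 : a ≤ x) (hx2 : x ≤ b) (hR : rectZ a c b d ⊆ B) (hp : (x, c - 1) ∈ B) :
    rectZ a (c - 1) b d ⊆ B := by
  have row : ∀ s, a ≤ s → s ≤ b → (s, c - 1) ∈ B :=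
    segment_spread_h hB (y := c - 1) (y' := c) (by simp) hx1 hx2 hp
      (fun s hs1 hs2 => hR (mem_rectZ.2 ⟨hs1, hs2, le_refl c, hcd⟩))
  intro v hv
  rw [mem_rectZ] at hv
  by_cases h : c ≤ v.2
  · exact hR (mem_rectZ.2 ⟨hv.1, hv.2.1, h, hv.2.2.2⟩)
  · have h1 : v.2 = c - 1 := by omega
    have := row v.1 hv.1 hv.2.1
    rw [← h1] at this
    exact eta_mem this

lemma mem_rect_of {x0 y0 x1 y1 u w : ℤ}
    (h : x0 ≤ u ∧ u ≤ x1 ∧ y0 ≤ w ∧ w ≤ y1) :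
    ((u, w) : ℤ × ℤ) ∈ rectZ x0 y0 x1 y1 := h

lemma attach_point {B : Set (ℤ × ℤ)} (hB : BClosed B) {a b c d x y : ℤ}
    (hab : a ≤ b) (hcd : c ≤ d) (hR : rectZ a c b d ⊆ B) (hp : (x, y) ∈ B)
    (hdist : ∃ p ∈ rectZ a c b d, (x - p.1).natAbs + (y - p.2).natAbs ≤ 2) :
    rectZ (min a x) (min c y) (max b x) (max d y) ⊆ B := by
  obtain ⟨p, hpR, hd⟩ := hdist
  rw [mem_rectZ] at hpR
  obtain ⟨hp1, hp2, hp3, hp4⟩ := hpR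
  have hxcase : (a ≤ x ∧ x ≤ b) ∨ x = b + 1 ∨ x = b + 2 ∨ x = a - 1 ∨ x = a - 2 := by omega
  have hycase : (c ≤ y ∧ y ≤ d) ∨ y = d + 1 ∨ y = d + 2 ∨ y = c - 1 ∨ y = c - 2 := by omega
  rcases hxcase with hx | hx | hx | hx | hx
  · -- x in range
    rcases hycase with hy | hy | hy | hy | hy
    · rw [min_eq_left (by omega : a ≤ x), min_eq_left (by omega : c ≤ y),
        max_eq_left (by omega : x ≤ b), max_eq_left (by omega : y ≤ d)]
      exact hR
    · subst hy
      rw [min_eq_left (by omega : a ≤ x), min_eq_left (by omega : c ≤ d + 1),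
        max_eq_left (by omega : x ≤ b), max_eq_right (by omega : d ≤ d + 1)]
      exact fill_up hB hcd hx.1 hx.2 hR hp
    · subst hy
      have h1 : (x, d + 1) ∈ B := by
        apply mem_of_two_nbrs hB (hR (mem_rect_of ⟨hx.1, hx.2, hcd, le_refl d⟩)) hp
        · intro h; rw [Prod.mk.injEq] at h; omega
        · simp [nbr_iff] <;> omega
        · simp [nbr_iff] <;> omega
      have R1 := fill_up hB hcd hx.1 hx.2 hR h1
      have hp' : (x, d + 1 + 1) ∈ B := by convert hp using 2 <;> omega
      have R2 := fill_up hB (by omega : c ≤ d + 1) hx.1 hx.2 R1 hp'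
      rw [min_eq_left (by omega : a ≤ x), min_eq_left (by omega : c ≤ d + 2),
        max_eq_left (by omega : x ≤ b), max_eq_right (by omega : d ≤ d + 2)]
      convert R2 using 2; omega
    · subst hy
      rw [min_eq_left (by omega : a ≤ x), min_eq_right (by omega : c - 1 ≤ c),
        max_eq_left (by omega : x ≤ b), max_eq_left (by omega : c - 1 ≤ d)]
      exact fill_down hB hcd hx.1 hx.2 hR hp
    · subst hy
      have h1 : (x, c - 1) ∈ B := by
        apply mem_of_two_nbrs hB (hR (mem_rect_of ⟨hx.1, hx.2, le_refl c, hcd⟩)) hp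
        · intro h; rw [Prod.mk.injEq] at h; omega
        · simp [nbr_iff] <;> omega
        · simp [nbr_iff] <;> omega
      have R1 := fill_down hB hcd hx.1 hx.2 hR h1
      have hp' : (x, c - 1 - 1) ∈ B := by convert hp using 2 <;> omega
      have R2 := fill_down hB (by omega : c - 1 ≤ d) hx.1 hx.2 R1 hp'
      rw [min_eq_left (by omega : a ≤ x), min_eq_right (by omega : c - 2 ≤ c),
        max_eq_left (by omega : x ≤ b), max_eq_left (by omega : c - 2 ≤ d)]
      convert R2 using 2; omega
  · -- x = b + 1
    subst hx
    have hy' : (c ≤ y ∧ y ≤ d) ∨ y = d + 1 ∨ y = c - 1 := by omega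
    rcases hy' with hy | hy | hy
    · rw [min_eq_left (by omega : a ≤ b + 1), min_eq_left (by omega : c ≤ y),
        max_eq_right (by omega : b ≤ b + 1), max_eq_left (by omega : y ≤ d)]
      exact fill_right hB hab hy.1 hy.2 hR hp
    · subst hy
      have h1 : (b + 1, d) ∈ B := by
        apply mem_of_two_nbrs hB (hR (mem_rect_of ⟨hab, le_refl b, hcd, le_refl d⟩)) hp
        · intro h; rw [Prod.mk.injEq] at h; omega
        · simp [nbr_iff] <;> omega
        · simp [nbr_iff] <;> omega
      have R1 := fill_right hB hab hcd (le_refl d) hR h1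
      have R2 := fill_up hB hcd (by omega : a ≤ b + 1) (le_refl (b + 1)) R1 hp
      rw [min_eq_left (by omega : a ≤ b + 1), min_eq_left (by omega : c ≤ d + 1),
        max_eq_right (by omega : b ≤ b + 1), max_eq_right (by omega : d ≤ d + 1)]
      exact R2
    · subst hy
      have h1 : (b + 1, c) ∈ B := by
        apply mem_of_two_nbrs hB (hR (mem_rect_of ⟨hab, le_refl b, le_refl c, hcd⟩)) hp
        · intro h; rw [Prod.mk.injEq] at h; omega
        · simp [nbr_iff] <;> omega
        · simp [nbr_iff] <;> omega
      have R1 := fill_right hB hab (le_refl c) hcd hR h1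
      have R2 := fill_down hB hcd (by omega : a ≤ b + 1) (le_refl (b + 1)) R1 hp
      rw [min_eq_left (by omega : a ≤ b + 1), min_eq_right (by omega : c - 1 ≤ c),
        max_eq_right (by omega : b ≤ b + 1), max_eq_left (by omega : c - 1 ≤ d)]
      exact R2
  · -- x = b + 2
    subst hx
    have hy : c ≤ y ∧ y ≤ d := by omega
    have h1 : (b + 1, y) ∈ B := by
      apply mem_of_two_nbrs hB (hR (mem_rect_of ⟨hab, le_refl b, hy.1, hy.2⟩)) hp
      · intro h; rw [Prod.mk.injEq] at h; omega
      · simp [nbr_iff] <;> omega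
      · simp [nbr_iff] <;> omega
    have R1 := fill_right hB hab hy.1 hy.2 hR h1
    have hp' : (b + 1 + 1, y) ∈ B := by convert hp using 2 <;> omega
    have R2 := fill_right hB (by omega : a ≤ b + 1) hy.1 hy.2 R1 hp'
    rw [min_eq_left (by omega : a ≤ b + 2), min_eq_left (by omega : c ≤ y),
      max_eq_right (by omega : b ≤ b + 2), max_eq_left (by omega : y ≤ d)]
    convert R2 using 2; omega
  · -- x = a - 1
    subst hx
    have hy' : (c ≤ y ∧ y ≤ d) ∨ y = d + 1 ∨ y = c - 1 := by omega
    rcases hy' with hy | hy | hy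
    · rw [min_eq_right (by omega : a - 1 ≤ a), min_eq_left (by omega : c ≤ y),
        max_eq_left (by omega : a - 1 ≤ b), max_eq_left (by omega : y ≤ d)]
      exact fill_left hB hab hy.1 hy.2 hR hp
    · subst hy
      have h1 : (a - 1, d) ∈ B := by
        apply mem_of_two_nbrs hB (hR (mem_rect_of ⟨le_refl a, hab, hcd, le_refl d⟩)) hp
        · intro h; rw [Prod.mk.injEq] at h; omega
        · simp [nbr_iff] <;> omega
        · simp [nbr_iff] <;> omega
      have R1 := fill_left hB hab hcd (le_refl d) hR h1
      have R2 := fill_up hB hcd (le_refl (a - 1)) (by omega : a - 1 ≤ b) R1 hp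
      rw [min_eq_right (by omega : a - 1 ≤ a), min_eq_left (by omega : c ≤ d + 1),
        max_eq_left (by omega : a - 1 ≤ b), max_eq_right (by omega : d ≤ d + 1)]
      exact R2
    · subst hy
      have h1 : (a - 1, c) ∈ B := by
        apply mem_of_two_nbrs hB (hR (mem_rect_of ⟨le_refl a, hab, le_refl c, hcd⟩)) hp
        · intro h; rw [Prod.mk.injEq] at h; omega
        · simp [nbr_iff] <;> omega
        · simp [nbr_iff] <;> omega
      have R1 := fill_left hB hab (le_refl c) hcd hR h1
      have R2 := fill_down hB hcd (le_refl (a - 1)) (by omega : a - 1 ≤ b) R1 hp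
      rw [min_eq_right (by omega : a - 1 ≤ a), min_eq_right (by omega : c - 1 ≤ c),
        max_eq_left (by omega : a - 1 ≤ b), max_eq_left (by omega : c - 1 ≤ d)]
      exact R2
  · -- x = a - 2
    subst hx
    have hy : c ≤ y ∧ y ≤ d := by omega
    have h1 : (a - 1, y) ∈ B := by
      apply mem_of_two_nbrs hB (hR (mem_rect_of ⟨le_refl a, hab, hy.1, hy.2⟩)) hp
      · intro h; rw [Prod.mk.injEq] at h; omega
      · simp [nbr_iff] <;> omega
      · simp [nbr_iff] <;> omega
    have R1 := fill_left hB hab hy.1 hy.2 hR h1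
    have hp' : (a - 1 - 1, y) ∈ B := by convert hp using 2 <;> omega
    have R2 := fill_left hB (by omega : a - 1 ≤ b) hy.1 hy.2 R1 hp'
    rw [min_eq_right (by omega : a - 2 ≤ a), min_eq_left (by omega : c ≤ y),
      max_eq_left (by omega : a - 2 ≤ b), max_eq_left (by omega : y ≤ d)]
    convert R2 using 2; omega

lemma overlap_fill {B : Set (ℤ × ℤ)} (hB : BClosed B) {a b c d a' b' c' d' : ℤ}
    {q : ℤ × ℤ} (hR : rectZ a c b d ⊆ B) (hS : rectZ a' c' b' d' ⊆ B)
    (hq1 : q ∈ rectZ a c b d) (hq2 : q ∈ rectZ a' c' b' d') :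
    rectZ (min a a') (min c c') (max b b') (max d d') ⊆ B := by
  rw [mem_rectZ] at hq1 hq2
  obtain ⟨q1a, q1b, q1c, q1d⟩ := hq1
  obtain ⟨q2a, q2b, q2c, q2d⟩ := hq2
  have hab : a ≤ b := le_trans q1a q1b
  have hcd : c ≤ d := le_trans q1c q1d
  -- grow right
  have right : ∀ k : ℕ, b + (k : ℤ) ≤ max b b' → rectZ a c (b + (k : ℤ)) d ⊆ B := by
    intro k
    induction k with
    | zero => intro _; simpa using hR
    | succ k ih =>
      intro hk
      push_cast at hk
      have ih' := ih (by omega)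
      have hseed : ((b + (k : ℤ) + 1, q.2) : ℤ × ℤ) ∈ B :=
        hS (mem_rect_of ⟨by omega, by omega, q2c, q2d⟩)
      have := fill_right hB (by omega : a ≤ b + (k : ℤ)) q1c q1d ih' hseed
      convert this using 2
      push_cast; ring
  have rightR : rectZ a c (max b b') d ⊆ B := by
    have := right (max b b' - b).toNat (by omega)
    convert this using 2
    omega
  -- grow left
  have left : ∀ k : ℕ, min a a' ≤ a - (k : ℤ) → rectZ (a - (k : ℤ)) c (max b b') d ⊆ B := by
    intro k
    induction k with
    | zero => intro _; simpa using rightR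
    | succ k ih =>
      intro hk
      push_cast at hk
      have ih' := ih (by omega)
      have hseed : ((a - (k : ℤ) - 1, q.2) : ℤ × ℤ) ∈ B :=
        hS (mem_rect_of ⟨by omega, by omega, q2c, q2d⟩)
      have := fill_left hB (by omega : a - (k : ℤ) ≤ max b b') q1c q1d ih' hseed
      convert this using 2
      push_cast; ring
  have leftR : rectZ (min a a') c (max b b') d ⊆ B := by
    have := left (a - min a a').toNat (by omega)
    convert this using 2
    omega
  -- grow up
  have up : ∀ k : ℕ, d + (k : ℤ) ≤ max d d' → rectZ (min a a') c (max b b') (d + (k : ℤ)) ⊆ B := by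
    intro k
    induction k with
    | zero => intro _; simpa using leftR
    | succ k ih =>
      intro hk
      push_cast at hk
      have ih' := ih (by omega)
      have hseed : ((q.1, d + (k : ℤ) + 1) : ℤ × ℤ) ∈ B :=
        hS (mem_rect_of ⟨q2a, q2b, by omega, by omega⟩)
      have := fill_up hB (by omega : c ≤ d + (k : ℤ)) (by omega) (by omega) ih' hseed
      convert this using 2
      push_cast; ring
  have upR : rectZ (min a a') c (max b b') (max d d') ⊆ B := by
    have := up (max d d' - d).toNat (by omega)
    convert this using 2
    omega
  -- grow down
  have down : ∀ k : ℕ, min c c' ≤ c - (k : ℤ) →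
      rectZ (min a a') (c - (k : ℤ)) (max b b') (max d d') ⊆ B := by
    intro k
    induction k with
    | zero => intro _; simpa using upR
    | succ k ih =>
      intro hk
      push_cast at hk
      have ih' := ih (by omega)
      have hseed : ((q.1, c - (k : ℤ) - 1) : ℤ × ℤ) ∈ B :=
        hS (mem_rect_of ⟨q2a, q2b, by omega, by omega⟩)
      have := fill_down hB (by omega : c - (k : ℤ) ≤ max d d') (by omega) (by omega) ih' hseed
      convert this using 2
      push_cast; ring
  have := down (c - min c c').toNat (by omega)
  convert this using 2
  omega

structure Rct where
  a : ℤ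
  b : ℤ
  c : ℤ
  d : ℤ
  hab : a ≤ b
  hcd : c ≤ d

def Rct.set (R : Rct) : Set (ℤ × ℤ) := rectZ R.a R.c R.b R.d

def Rct.lg (R : Rct) : ℤ := max (R.b - R.a + 1) (R.d - R.c + 1)

def inter (R S : Rct) : Prop :=
  ∃ p ∈ R.set, ∃ q ∈ S.set, (p.1 - q.1).natAbs + (p.2 - q.2).natAbs ≤ 2

def bbox (R S : Rct) : Rct :=
  ⟨min R.a S.a, max R.b S.b, min R.c S.c, max R.d S.d,
    le_trans (min_le_left _ _) (le_trans R.hab (le_max_left _ _)),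
    le_trans (min_le_left _ _) (le_trans R.hcd (le_max_left _ _))⟩

def unitR (p : ℤ × ℤ) : Rct := ⟨p.1, p.1, p.2, p.2, le_refl _, le_refl _⟩

inductive Deriv (F : Set (ℤ × ℤ)) : Rct → Prop
  | single (p : ℤ × ℤ) (hp : p ∈ F) : Deriv F (unitR p)
  | merge (R S : Rct) (hR : Deriv F R) (hS : Deriv F S) (h : inter R S) :
      Deriv F (bbox R S)

lemma subset_bbox_left (R S : Rct) : R.set ⊆ (bbox R S).set := by
  intro v hv
  rw [Rct.set, mem_rectZ] at hv ⊢
  refine ⟨le_trans (min_le_left _ _) hv.1, le_trans hv.2.1 (le_max_left _ _),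
    le_trans (min_le_left _ _) hv.2.2.1, le_trans hv.2.2.2 (le_max_left _ _)⟩

lemma subset_bbox_right (R S : Rct) : S.set ⊆ (bbox R S).set := by
  intro v hv
  rw [Rct.set, mem_rectZ] at hv ⊢
  refine ⟨le_trans (min_le_right _ _) hv.1, le_trans hv.2.1 (le_max_right _ _),
    le_trans (min_le_right _ _) hv.2.2.1, le_trans hv.2.2.2 (le_max_right _ _)⟩

lemma unitR_set (p : ℤ × ℤ) : (unitR p).set = {p} := by
  ext v
  simp only [Rct.set, unitR, mem_rectZ, Set.mem_singleton_iff]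
  constructor
  · intro h
    have h1 : v.1 = p.1 := by omega
    have h2 : v.2 = p.2 := by omega
    have : v = (v.1, v.2) := (Prod.mk.eta).symm
    rw [this, h1, h2]
  · intro h
    subst h
    exact ⟨le_refl _, le_refl _, le_refl _, le_refl _⟩

lemma merge_fill {R S : Rct} (h : inter R S) :
    (bbox R S).set ⊆ bootClosure (R.set ∪ S.set) := by
  set B := bootClosure (R.set ∪ S.set) with hBdef
  have hB : BClosed B := bootClosure_closed _
  have hRB : R.set ⊆ B := Set.subset_union_left.trans (subset_bootClosure _)
  have hSB : S.set ⊆ B := Set.subset_union_right.trans (subset_bootClosure _)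
  obtain ⟨p, hp, q, hq, hd⟩ := h
  have hq' : q ∈ B := hSB hq
  rw [Rct.set, mem_rectZ] at hp hq
  have step1 : rectZ (min R.a q.1) (min R.c q.2) (max R.b q.1) (max R.d q.2) ⊆ B := by
    apply attach_point hB R.hab R.hcd hRB (eta_mem hq')
    exact ⟨p, by exact ⟨hp.1, hp.2.1, hp.2.2.1, hp.2.2.2⟩, by omega⟩
  have hqstep : q ∈ rectZ (min R.a q.1) (min R.c q.2) (max R.b q.1) (max R.d q.2) :=
    mem_rectZ.2 ⟨min_le_right _ _, le_max_right _ _, min_le_right _ _, le_max_right _ _⟩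
  have step2 := overlap_fill hB step1 hSB hqstep
    (mem_rectZ.2 ⟨hq.1, hq.2.1, hq.2.2.1, hq.2.2.2⟩)
  intro v hv
  apply step2
  simp only [Rct.set, bbox] at hv
  rw [mem_rectZ] at hv ⊢
  have e1 : min (min R.a q.1) S.a = min R.a S.a := by
    simp only [min_def]; split_ifs <;> omega
  have e2 : min (min R.c q.2) S.c = min R.c S.c := by
    simp only [min_def]; split_ifs <;> omega
  have e3 : max (max R.b q.1) S.b = max R.b S.b := by
    simp only [max_def]; split_ifs <;> omega
  have e4 : max (max R.d q.2) S.d = max R.d S.d := by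
    simp only [max_def]; split_ifs <;> omega
  rw [e1, e2, e3, e4]
  exact hv

lemma deriv_sound {F : Set (ℤ × ℤ)} {R : Rct} (hD : Deriv F R) :
    R.set ⊆ bootClosure (F ∩ R.set) := by
  induction hD with
  | single p hp =>
    intro v hv
    rw [unitR_set] at hv ⊢
    rw [Set.mem_singleton_iff] at hv
    subst hv
    exact subset_bootClosure _ ⟨hp, rfl⟩
  | merge R S hR hS h ihR ihS =>
    have h2 : R.set ∪ S.set ⊆ bootClosure (F ∩ (bbox R S).set) := by
      apply Set.union_subset
      · exact ihR.trans (bootClosure_mono (Set.inter_subset_inter_right _ (subset_bbox_left R S)))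
      · exact ihS.trans (bootClosure_mono (Set.inter_subset_inter_right _ (subset_bbox_right R S)))
    exact (merge_fill h).trans (bootClosure_min h2 (bootClosure_closed _))

lemma lg_pos (R : Rct) : 1 ≤ R.lg :=
  le_trans (by have := R.hab; omega) (le_max_left _ _)

lemma lg_bbox_le {R S : Rct} (h : inter R S) : (bbox R S).lg ≤ R.lg + S.lg + 1 := by
  obtain ⟨p, hp, q, hq, hd⟩ := h
  rw [Rct.set, mem_rectZ] at hp hq
  show max (max R.b S.b - min R.a S.a + 1) (max R.d S.d - min R.c S.c + 1) ≤
    max (R.b - R.a + 1) (R.d - R.c + 1) + max (S.b - S.a + 1) (S.d - S.c + 1) + 1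
  obtain ⟨hp1, hp2, hp3, hp4⟩ := hp
  obtain ⟨hq1, hq2, hq3, hq4⟩ := hq
  simp only [max_def, min_def]
  split_ifs <;> omega

lemma AL_lemma {F : Set (ℤ × ℤ)} {R : Rct} (hD : Deriv F R) :
    ∀ L : ℤ, 1 ≤ L → L ≤ R.lg → ∃ T : Rct, Deriv F T ∧ T.set ⊆ R.set ∧
      L ≤ T.lg ∧ T.lg ≤ 2 * L := by
  induction hD with
  | single p hp =>
    intro L h1 h2
    have hlg : (unitR p).lg = 1 := by
      show max (p.1 - p.1 + 1) (p.2 - p.2 + 1) = 1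
      simp
    refine ⟨unitR p, Deriv.single p hp, subset_rfl, ?_, ?_⟩ <;> omega
  | merge R S hR hS h ihR ihS =>
    intro L h1 h2
    by_cases hc : (bbox R S).lg ≤ 2 * L
    · exact ⟨bbox R S, Deriv.merge R S hR hS h, subset_rfl, h2, hc⟩
    · have hb := lg_bbox_le h
      have hR1 := lg_pos R
      have hS1 := lg_pos S
      have hcase : L ≤ R.lg ∨ L ≤ S.lg := by omega
      rcases hcase with hx | hx
      · obtain ⟨T, hT1, hT2, hT3, hT4⟩ := ihR L h1 hx
        exact ⟨T, hT1, hT2.trans (subset_bbox_left R S), hT3, hT4⟩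
      · obtain ⟨T, hT1, hT2, hT3, hT4⟩ := ihS L h1 hx
        exact ⟨T, hT1, hT2.trans (subset_bbox_right R S), hT3, hT4⟩

def listSet (m : List Rct) : Set (ℤ × ℤ) := {v | ∃ R ∈ m, v ∈ R.set}

lemma inter_symm {R S : Rct} (h : inter R S) : inter S R := by
  obtain ⟨p, hp, q, hq, hd⟩ := h
  exact ⟨q, hq, p, hp, by omega⟩

lemma not_inter_symmetric : Symmetric (fun R S : Rct => ¬ inter R S) :=
  fun _ _ h h' => h (inter_symm h')

lemma mem_of_nbrs_in_rect {R : Rct} {v p q : ℤ × ℤ} (hp : p ∈ R.set) (hq : q ∈ R.set)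
    (hpq : p ≠ q) (h1 : nbr v p) (h2 : nbr v q) : v ∈ R.set := by
  rw [Rct.set, mem_rectZ] at hp hq ⊢
  rw [nbr_iff] at h1 h2
  have hne : p.1 ≠ q.1 ∨ p.2 ≠ q.2 := by
    by_contra hcon
    push_neg at hcon
    exact hpq (Prod.ext hcon.1 hcon.2)
  omega

lemma union_closed {m : List Rct} (hm : m.Pairwise (fun R S => ¬ inter R S)) :
    BClosed (listSet m) := by
  intro v hv
  have hfin : ({w | nbr v w} ∩ listSet m).Finite :=
    (nbr_finite v).subset Set.inter_subset_left
  obtain ⟨p, q, hp, hq, hpq⟩ := (Set.one_lt_ncard_iff hfin).1 hv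
  obtain ⟨hnp, Rp, hRpm, hpR⟩ := hp
  obtain ⟨hnq, Rq, hRqm, hqR⟩ := hq
  by_cases hRR : Rp = Rq
  · subst hRR
    exact ⟨Rp, hRpm, mem_of_nbrs_in_rect hpR hqR hpq hnp hnq⟩
  · exfalso
    apply (@List.Pairwise.forall _ _ _ ⟨not_inter_symmetric⟩ hm) hRpm hRqm hRR
    refine ⟨p, hpR, q, hqR, ?_⟩
    rw [Set.mem_setOf_eq, nbr_iff] at hnp hnq
    omega

lemma insert_rect {F : Set (ℤ × ℤ)} :
    ∀ (N : ℕ) (m : List Rct), m.length ≤ N →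
      m.Pairwise (fun R S => ¬ inter R S) → (∀ S ∈ m, Deriv F S) →
      ∀ R : Rct, Deriv F R →
      ∃ m' : List Rct, m'.Pairwise (fun R S => ¬ inter R S) ∧
        (∀ S ∈ m', Deriv F S) ∧ R.set ∪ listSet m ⊆ listSet m' := by
  intro N
  induction N with
  | zero =>
    intro m hlen hpw hder R hR
    have hm : m = [] := List.length_eq_zero_iff.1 (Nat.le_zero.1 hlen)
    subst hm
    refine ⟨[R], by simp, by simpa using hR, ?_⟩
    intro v hv
    rcases hv with hv | hv
    · exact ⟨R, by simp, hv⟩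
    · simp [listSet] at hv
  | succ N ih =>
    intro m hlen hpw hder R hR
    by_cases hex : ∃ S ∈ m, inter R S
    · obtain ⟨S, hSm, hint⟩ := hex
      obtain ⟨m₁, m₂, rfl⟩ := List.append_of_mem hSm
      have hsub : List.Sublist (m₁ ++ m₂) (m₁ ++ S :: m₂) :=
        ((List.Sublist.refl m₂).cons S).append_left m₁
      have hlen' : (m₁ ++ m₂).length ≤ N := by
        have := hsub.length_le
        simp at hlen ⊢
        simp at this
        omega
      have hpw' := hpw.sublist hsub
      have hder' : ∀ T ∈ m₁ ++ m₂, Deriv F T := fun T hT => hder T (hsub.mem hT)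
      have hDS : Deriv F S := hder S hSm
      obtain ⟨m', h1, h2, h3⟩ := ih (m₁ ++ m₂) hlen' hpw' hder' (bbox R S)
        (Deriv.merge R S hR hDS hint)
      refine ⟨m', h1, h2, ?_⟩
      intro v hv
      apply h3
      rcases hv with hv | hv
      · exact Or.inl (subset_bbox_left R S hv)
      · obtain ⟨T, hTm, hvT⟩ := hv
        rw [List.mem_append] at hTm
        rcases hTm with hTm | hTm
        · exact Or.inr ⟨T, by simp [hTm], hvT⟩
        · rw [List.mem_cons] at hTm
          rcases hTm with rfl | hTm
          · exact Or.inl (subset_bbox_right R T hvT)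
          · exact Or.inr ⟨T, by simp [hTm], hvT⟩
    · push_neg at hex
      refine ⟨R :: m, ?_, ?_, ?_⟩
      · rw [List.pairwise_cons]
        exact ⟨fun S hS => hex S hS, hpw⟩
      · intro S hS
        rcases List.mem_cons.1 hS with rfl | hS
        · exact hR
        · exact hder S hS
      · intro v hv
        rcases hv with hv | hv
        · exact ⟨R, by simp, hv⟩
        · obtain ⟨T, hTm, hvT⟩ := hv
          exact ⟨T, by simp [hTm], hvT⟩

lemma build {F : Set (ℤ × ℤ)} (ps : List (ℤ × ℤ)) :
    (∀ p ∈ ps, p ∈ F) →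
    ∃ m : List Rct, m.Pairwise (fun R S => ¬ inter R S) ∧
      (∀ S ∈ m, Deriv F S) ∧ ∀ p ∈ ps, p ∈ listSet m := by
  induction ps with
  | nil => exact fun _ => ⟨[], by simp, by simp, by simp⟩
  | cons p ps ih =>
    intro hps
    obtain ⟨m, h1, h2, h3⟩ := ih (fun q hq => hps q (List.mem_cons_of_mem p hq))
    obtain ⟨m', g1, g2, g3⟩ := insert_rect m.length m le_rfl h1 h2 (unitR p)
      (Deriv.single p (hps p (List.mem_cons_self)))
    refine ⟨m', g1, g2, ?_⟩
    intro q hq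
    rcases List.mem_cons.1 hq with rfl | hq
    · exact g3 (Or.inl (by rw [unitR_set]; rfl))
    · exact g3 (Or.inr (h3 q hq))

lemma rect_in_one {m : List Rct} (hm : m.Pairwise (fun R S => ¬ inter R S))
    {Q : Rct} (hcov : Q.set ⊆ listSet m) : ∃ R ∈ m, Q.set ⊆ R.set := by
  have hcorner : ((Q.a, Q.c) : ℤ × ℤ) ∈ Q.set := mem_rect_of ⟨le_refl _, Q.hab, le_refl _, Q.hcd⟩
  obtain ⟨R0, hR0m, hR0⟩ := hcov hcorner
  refine ⟨R0, hR0m, ?_⟩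
  have key : ∀ u w : ℤ × ℤ, u ∈ R0.set → w ∈ listSet m →
      (u.1 - w.1).natAbs + (u.2 - w.2).natAbs ≤ 2 → w ∈ R0.set := by
    intro u w hu hw hd
    obtain ⟨R1, hR1m, hwR⟩ := hw
    by_cases h : R0 = R1
    · subst h; exact hwR
    · exact absurd ⟨u, hu, w, hwR, hd⟩ ((@List.Pairwise.forall _ _ _ ⟨not_inter_symmetric⟩ hm) hR0m hR1m h)
  have row : ∀ k : ℕ, Q.a + (k : ℤ) ≤ Q.b → ((Q.a + (k : ℤ), Q.c) : ℤ × ℤ) ∈ R0.set := by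
    intro k
    induction k with
    | zero => intro _; simpa using hR0
    | succ k ihk =>
      intro hk
      push_cast at hk
      have hprev := ihk (by omega)
      have hcur : ((Q.a + ((k : ℤ) + 1), Q.c) : ℤ × ℤ) ∈ Q.set :=
        mem_rect_of ⟨by omega, by omega, le_refl _, Q.hcd⟩
      have := key _ _ hprev (hcov hcur) (by simp <;> omega)
      convert this using 2 <;> push_cast <;> ring
  have col : ∀ x : ℤ, Q.a ≤ x → x ≤ Q.b →
      ∀ k : ℕ, Q.c + (k : ℤ) ≤ Q.d → ((x, Q.c + (k : ℤ)) : ℤ × ℤ) ∈ R0.set := by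
    intro x hx1 hx2 k
    induction k with
    | zero =>
      intro _
      have := row (x - Q.a).toNat (by omega)
      convert this using 2 <;> omega
    | succ k ihk =>
      intro hk
      push_cast at hk
      have hprev := ihk (by omega)
      have hcur : ((x, Q.c + ((k : ℤ) + 1)) : ℤ × ℤ) ∈ Q.set :=
        mem_rect_of ⟨hx1, hx2, by omega, by omega⟩
      have := key _ _ hprev (hcov hcur) (by simp <;> omega)
      convert this using 2 <;> push_cast <;> ring
  intro v hv
  rw [Rct.set, mem_rectZ] at hv
  have := col v.1 hv.1 hv.2.1 (v.2 - Q.c).toNat (by omega)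
  have heq : ((v.1, Q.c + ((v.2 - Q.c).toNat : ℤ)) : ℤ × ℤ) = v := by
    have : Q.c + ((v.2 - Q.c).toNat : ℤ) = v.2 := by omega
    rw [this]
  rwa [heq] at this

lemma bbox_subset {R S Q : Rct} (hR : R.set ⊆ Q.set) (hS : S.set ⊆ Q.set) :
    (bbox R S).set ⊆ Q.set := by
  have c1 := hR (mem_rect_of ⟨le_refl _, R.hab, le_refl _, R.hcd⟩)
  have c2 := hR (mem_rect_of ⟨R.hab, le_refl _, R.hcd, le_refl _⟩)
  have c3 := hS (mem_rect_of ⟨le_refl _, S.hab, le_refl _, S.hcd⟩)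
  have c4 := hS (mem_rect_of ⟨S.hab, le_refl _, S.hcd, le_refl _⟩)
  simp only [Rct.set, mem_rectZ] at c1 c2 c3 c4
  intro v hv
  simp only [Rct.set, bbox, mem_rectZ] at hv
  refine ⟨le_trans (le_min c1.1 c3.1) hv.1, le_trans hv.2.1 (max_le c2.2.1 c4.2.1),
    le_trans (le_min c1.2.2.1 c3.2.2.1) hv.2.2.1,
    le_trans hv.2.2.2 (max_le c2.2.2.2 c4.2.2.2)⟩

lemma deriv_subset {F : Set (ℤ × ℤ)} {Q : Rct} (hQ : F ⊆ Q.set) {R : Rct}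
    (hD : Deriv F R) : R.set ⊆ Q.set := by
  induction hD with
  | single p hp =>
    intro v hv
    rw [unitR_set] at hv
    rw [Set.mem_singleton_iff] at hv
    subst hv
    exact hQ hp
  | merge R S hR hS h ihR ihS => exact bbox_subset ihR ihS

/-- The Aizenman–Lebowitz lemma: if `A` internally spans `[n]²` then for every
`1 ≤ L ≤ n` there is an internally spanned rectangle whose longer side length
lies between `L` and `2L`. -/
theorem stmt13 (n : ℕ) (hn : 1 ≤ n) (A : Set (ℤ × ℤ))
    (hA : A ⊆ rectZ 1 1 n n) (hperc : rectZ 1 1 n n ⊆ bootClosure A)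
    (L : ℕ) (hL1 : 1 ≤ L) (hLn : L ≤ n) :
    ∃ x0 y0 x1 y1 : ℤ, x0 ≤ x1 ∧ y0 ≤ y1 ∧
      rectZ x0 y0 x1 y1 ⊆ rectZ 1 1 n n ∧
      rectZ x0 y0 x1 y1 ⊆ bootClosure (A ∩ rectZ x0 y0 x1 y1) ∧
      (L : ℤ) ≤ max (x1 - x0 + 1) (y1 - y0 + 1) ∧
      max (x1 - x0 + 1) (y1 - y0 + 1) ≤ 2 * (L : ℤ) := by
  have hn' : (1 : ℤ) ≤ (n : ℤ) := by exact_mod_cast hn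
  have hsqfin : (rectZ 1 1 (n : ℤ) (n : ℤ)).Finite := by
    apply Set.Finite.subset (Set.finite_Icc ((1 : ℤ), (1 : ℤ)) ((n : ℤ), (n : ℤ)))
    intro v hv
    rw [mem_rectZ] at hv
    simp only [Set.mem_Icc, Prod.le_def]
    exact ⟨⟨hv.1, hv.2.2.1⟩, ⟨hv.2.1, hv.2.2.2⟩⟩
  have hAfin : A.Finite := hsqfin.subset hA
  obtain ⟨m, h1, h2, h3⟩ := build hAfin.toFinset.toList
    (fun p hp => by rwa [Finset.mem_toList, Set.Finite.mem_toFinset] at hp)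
  have hAcov : A ⊆ listSet m := by
    intro p hp
    exact h3 p (by rwa [Finset.mem_toList, Set.Finite.mem_toFinset])
  have hclosure : bootClosure A ⊆ listSet m := bootClosure_min hAcov (union_closed h1)
  set Qsq : Rct := ⟨1, (n : ℤ), 1, (n : ℤ), hn', hn'⟩ with hQsq
  have hcov : Qsq.set ⊆ listSet m := fun v hv => hclosure (hperc hv)
  obtain ⟨R0, hR0m, hQR0⟩ := rect_in_one h1 hcov
  have hD : Deriv A R0 := h2 R0 hR0m
  have hc1 : ((1 : ℤ), (1 : ℤ)) ∈ R0.set := hQR0 (mem_rect_of ⟨le_refl _, hn', le_refl _, hn'⟩)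
  have hc2 : (((n : ℤ)), ((n : ℤ))) ∈ R0.set := hQR0 (mem_rect_of ⟨hn', le_refl _, hn', le_refl _⟩)
  simp only [Rct.set, mem_rectZ] at hc1 hc2
  have hLn' : (L : ℤ) ≤ (n : ℤ) := by exact_mod_cast hLn
  have hlow : (L : ℤ) ≤ R0.lg := by
    have : (L : ℤ) ≤ R0.b - R0.a + 1 := by omega
    exact le_trans this (le_max_left _ _)
  obtain ⟨T, hT1, hT2, hT3, hT4⟩ := AL_lemma hD (L : ℤ) (by exact_mod_cast hL1) hlow
  have hR0sq : R0.set ⊆ Qsq.set := deriv_subset (Q := Qsq) hA hD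
  refine ⟨T.a, T.c, T.b, T.d, T.hab, T.hcd, ?_, ?_, hT3, hT4⟩
  · exact hT2.trans hR0sq
  · exact deriv_sound hT1
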